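/- Let n ≥ 1 be an integer, L > 0, μ₁, …, μ_n real numbers with μ₁ = max_j μ_j, and C > 0. There exist K > 1 and t₀ > 0 such that for every t ≥ t₀ the following holds: if B : [0,L] → M_n(ℝ) is continuous with |B(s)_{ij}| ≤ C·t^{−1/n} for all s, i, j, and Φ : [0,L] → M_n(ℝ) is differentiable with Φ(0) = Id and Φ′(s) = (t^{1/n}·diag(μ₁,…,μ_n) + B(s))·Φ(s) for all s ∈ [0,L], then the spectral radius ρ of the matrix Φ(L) satisfies (1/K)·e^{L t^{1/n} μ₁} ≤ ρ ≤ K·e^{L t^{1/n} μ₁}. -/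

import Mathlib

open Set

attribute [local instance] Matrix.linftyOpNormedAddCommGroup Matrix.linftyOpNormedRing
  Matrix.linftyOpNormedAlgebra

namespace Statement19Aux

variable {n : ℕ}

/-- entry evaluation as a continuous linear map -/
noncomputable def entryCLM (n : ℕ) (i j : Fin n) : Matrix (Fin n) (Fin n) ℝ →L[ℝ] ℝ :=
  LinearMap.toContinuousLinearMap
    { toFun := fun M => M i j
      map_add' := fun _ _ => rfl
      map_smul' := fun _ _ => rfl }

@[simp] lemma entryCLM_apply (i j : Fin n) (M : Matrix (Fin n) (Fin n) ℝ) :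
    entryCLM n i j M = M i j := rfl

lemma abs_entry_le_norm (A : Matrix (Fin n) (Fin n) ℝ) (i j : Fin n) : |A i j| ≤ ‖A‖ := by
  rw [Matrix.linfty_opNorm_def]
  have h1 : ‖A i j‖₊ ≤ ∑ j', ‖A i j'‖₊ :=
    Finset.single_le_sum (f := fun j' => ‖A i j'‖₊) (fun _ _ => zero_le) (Finset.mem_univ j)
  have h2 : (∑ j', ‖A i j'‖₊) ≤ (Finset.univ : Finset (Fin n)).sup fun i => ∑ j', ‖A i j'‖₊ :=
    Finset.le_sup (f := fun i => ∑ j', ‖A i j'‖₊) (Finset.mem_univ i)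
  have := h1.trans h2
  have h3 : (‖A i j‖₊ : ℝ) ≤ (((Finset.univ : Finset (Fin n)).sup fun i => ∑ j', ‖A i j'‖₊ : NNReal) : ℝ) := by
    exact_mod_cast this
  simpa [Real.norm_eq_abs] using h3

lemma norm_le_sum_abs (A : Matrix (Fin n) (Fin n) ℝ) : ‖A‖ ≤ ∑ i, ∑ j, |A i j| := by
  rw [Matrix.linfty_opNorm_def]
  have h : ((Finset.univ : Finset (Fin n)).sup fun i => ∑ j', ‖A i j'‖₊) ≤
      ∑ i, ∑ j', ‖A i j'‖₊ :=
    Finset.sup_le fun i _ =>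
      Finset.single_le_sum (f := fun i => ∑ j', ‖A i j'‖₊) (fun _ _ => zero_le)
        (Finset.mem_univ i)
  have h3 : (((Finset.univ : Finset (Fin n)).sup fun i => ∑ j', ‖A i j'‖₊ : NNReal) : ℝ) ≤
      ((∑ i, ∑ j', ‖A i j'‖₊ : NNReal) : ℝ) := by exact_mod_cast h
  refine h3.trans ?_
  push_cast
  simp [Real.norm_eq_abs, le_refl]

/-- Scalar ODE comparison. -/
lemma ode_entry_bound {L : ℝ} {d : ℝ} (hd : d ≤ 0) {w g : ℝ → ℝ}
    (hw : ContinuousOn w (Icc 0 L)) (hg : ContinuousOn g (Icc 0 L))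
    (hderiv : ∀ s ∈ Icc 0 L, HasDerivWithinAt w (d * w s + g s) (Icc 0 L) s)
    {x : ℝ} (hx : x ∈ Icc 0 L) :
    |w x - Real.exp (d * x) * w 0| ≤ ∫ r in (0:ℝ)..x, |g r| := by
  obtain ⟨hx0, hxL⟩ := hx
  have hsub : Icc (0:ℝ) x ⊆ Icc 0 L := Icc_subset_Icc le_rfl hxL
  set c : ℝ → ℝ := fun r => Real.exp (-d * r) with hc_def
  have hc_cont : Continuous c := by continuity
  have hcpos : ∀ r, 0 < c r := fun r => Real.exp_pos _
  have key : ∀ r ∈ Icc (0:ℝ) L, HasDerivWithinAt (fun r => c r * w r) (c r * g r) (Icc 0 L) r := by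
    intro r hr
    have h1 : HasDerivAt (fun y : ℝ => -d * y) (-d) r := by
      simpa using (hasDerivAt_id r).const_mul (-d)
    have hc : HasDerivAt c (c r * -d) r := h1.exp
    have := (hc.hasDerivWithinAt).mul (hderiv r hr)
    rw [show c r * g r = c r * -d * w r + c r * (d * w r + g r) by ring]
    exact this
  have hcw_cont : ContinuousOn (fun r => c r * w r) (Icc 0 x) :=
    (hc_cont.continuousOn).mul (hw.mono hsub)
  have hcg_cont : ContinuousOn (fun r => c r * g r) (Icc 0 x) :=
    (hc_cont.continuousOn).mul (hg.mono hsub)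
  have hint : IntervalIntegrable (fun r => c r * g r) MeasureTheory.volume 0 x := by
    apply ContinuousOn.intervalIntegrable
    rwa [uIcc_of_le hx0]
  have hftc : ∫ r in (0:ℝ)..x, c r * g r = c x * w x - c 0 * w 0 := by
    apply intervalIntegral.integral_eq_sub_of_hasDeriv_right_of_le hx0 hcw_cont _ hint
    intro r hr
    have hrL : r ∈ Icc (0:ℝ) L := ⟨hr.1.le, hr.2.le.trans hxL⟩
    have hmem : Icc (0:ℝ) L ∈ nhds r := Icc_mem_nhds hr.1 (lt_of_lt_of_le hr.2 hxL)
    exact ((key r hrL).hasDerivAt hmem).hasDerivWithinAt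
  have hc0 : c 0 = 1 := by simp [hc_def]
  have hcx1 : Real.exp (d * x) * c x = 1 := by
    rw [hc_def]; rw [← Real.exp_add]; ring_nf; exact Real.exp_zero
  have hrepr : w x - Real.exp (d * x) * w 0 = Real.exp (d * x) * ∫ r in (0:ℝ)..x, c r * g r := by
    rw [hftc, hc0]
    have : Real.exp (d * x) * (c x * w x - 1 * w 0)
        = (Real.exp (d * x) * c x) * w x - Real.exp (d * x) * w 0 := by ring
    rw [this, hcx1, one_mul]
  rw [hrepr, abs_mul, abs_of_pos (Real.exp_pos _)]
  have habs : |∫ r in (0:ℝ)..x, c r * g r| ≤ ∫ r in (0:ℝ)..x, |c r * g r| :=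
    intervalIntegral.abs_integral_le_integral_abs hx0
  have h2 : Real.exp (d * x) * ∫ r in (0:ℝ)..x, |c r * g r|
      = ∫ r in (0:ℝ)..x, Real.exp (d * x) * |c r * g r| :=
    (intervalIntegral.integral_const_mul _ _).symm
  have h3 : (∫ r in (0:ℝ)..x, Real.exp (d * x) * |c r * g r|) ≤ ∫ r in (0:ℝ)..x, |g r| := by
    apply intervalIntegral.integral_mono_on hx0
    · apply ContinuousOn.intervalIntegrable
      rw [uIcc_of_le hx0]
      exact continuousOn_const.mul hcg_cont.abs
    · apply ContinuousOn.intervalIntegrable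
      rw [uIcc_of_le hx0]
      exact (hg.mono hsub).abs
    · intro r hr
      rw [abs_mul, abs_of_pos (hcpos r), hc_def]
      have : Real.exp (d * x) * (Real.exp (-d * r) * |g r|)
          = Real.exp (d * x + -d * r) * |g r| := by rw [Real.exp_add]; ring
      rw [this]
      have hexp : Real.exp (d * x + -d * r) ≤ 1 := by
        rw [Real.exp_le_one_iff]
        have : d * x + -d * r = d * (x - r) := by ring
        rw [this]
        exact mul_nonpos_of_nonpos_of_nonneg hd (by linarith [hr.2])
      nlinarith [abs_nonneg (g r)]
  calc Real.exp (d * x) * |∫ r in (0:ℝ)..x, c r * g r|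
      ≤ Real.exp (d * x) * ∫ r in (0:ℝ)..x, |c r * g r| :=
        mul_le_mul_of_nonneg_left habs (Real.exp_pos _).le
    _ = ∫ r in (0:ℝ)..x, Real.exp (d * x) * |c r * g r| := h2
    _ ≤ ∫ r in (0:ℝ)..x, |g r| := h3

lemma charpoly_eval (m : ℕ) (M : Matrix (Fin m) (Fin m) ℂ) (lam : ℂ) :
    M.charpoly.eval lam = (lam • (1 : Matrix (Fin m) (Fin m) ℂ) - M).det := by
  rw [Matrix.charpoly, eval_det, Matrix.matPolyEquiv_charmatrix]
  congr 1
  rw [Polynomial.eval_sub, Polynomial.eval_X, Polynomial.eval_C]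
  congr 1
  rw [Matrix.scalar_apply]
  ext i j
  by_cases h : i = j <;> simp [Matrix.diagonal_apply, Matrix.one_apply, h]

lemma mem_spectrum_iff_root (m : ℕ) (M : Matrix (Fin m) (Fin m) ℂ) (lam : ℂ) :
    lam ∈ spectrum ℂ M ↔ M.charpoly.IsRoot lam := by
  rw [spectrum.mem_iff, Polynomial.IsRoot, charpoly_eval]
  rw [Algebra.algebraMap_eq_smul_one]
  rw [Matrix.isUnit_iff_isUnit_det, isUnit_iff_ne_zero, not_not]

lemma hasEigenvalue_of_mem_spectrum (m : ℕ) (M : Matrix (Fin m) (Fin m) ℂ) (lam : ℂ)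
    (h : lam ∈ spectrum ℂ M) : Module.End.HasEigenvalue (Matrix.toLin' M) lam := by
  have heq : Matrix.toLin' M = Matrix.toLinAlgEquiv' M := by
    apply LinearMap.ext
    intro v
    rw [Matrix.toLin'_apply, Matrix.toLinAlgEquiv'_apply]
  have hsp : spectrum ℂ (Matrix.toLinAlgEquiv' M) = spectrum ℂ M :=
    AlgEquiv.spectrum_eq Matrix.toLinAlgEquiv' M
  rw [heq]
  exact Module.End.hasEigenvalue_iff_mem_spectrum.mpr (hsp.symm ▸ h)

end Statement19Aux

open Statement19Aux

set_option maxHeartbeats 1000000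

/-- ODE core of the WKB-exponent theorem: with `μ₁ = max_j μ_j` (here `μ 0` plays the role of
`μ₁`), there are `K > 1`, `t₀ > 0` so that for `t ≥ t₀`: if `|B(s)_{ij}| ≤ C t^{−1/n}`,
`Φ(0) = Id` and `Φ′(s) = (t^{1/n} diag(μ₁,…,μ_n) + B(s))Φ(s)` on `[0,L]`, then the spectral
radius `ρ` of `Φ(L)` (the maximum of the moduli of its complex eigenvalues) satisfies
`(1/K)e^{L t^{1/n} μ₁} ≤ ρ ≤ K e^{L t^{1/n} μ₁}`. -/
theorem statement19 (n : ℕ) [NeZero n] (hn : 1 ≤ n) (L : ℝ) (hL : 0 < L)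
    (μ : Fin n → ℝ) (hμ : ∀ j, μ j ≤ μ 0) (C : ℝ) (hC : 0 < C) :
    ∃ K : ℝ, 1 < K ∧ ∃ t₀ : ℝ, 0 < t₀ ∧ ∀ t : ℝ, t₀ ≤ t →
      ∀ B : ℝ → Matrix (Fin n) (Fin n) ℝ, ContinuousOn B (Icc 0 L) →
      (∀ s ∈ Icc (0 : ℝ) L, ∀ i j : Fin n, |B s i j| ≤ C * t ^ (-(1 / (n : ℝ)))) →
      ∀ Φ : ℝ → Matrix (Fin n) (Fin n) ℝ, Φ 0 = 1 →
      (∀ s ∈ Icc (0 : ℝ) L,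
        HasDerivWithinAt Φ
          ((t ^ ((1 : ℝ) / n) • Matrix.diagonal μ + B s) * Φ s) (Icc 0 L) s) →
      (∃ lam ∈ spectrum ℂ ((Φ L).map (Complex.ofReal)),
        (1 / K) * Real.exp (L * t ^ ((1 : ℝ) / n) * μ 0) ≤ ‖lam‖) ∧
      (∀ lam ∈ spectrum ℂ ((Φ L).map (Complex.ofReal)),
        ‖lam‖ ≤ K * Real.exp (L * t ^ ((1 : ℝ) / n) * μ 0)) := by
  have hn1 : (1:ℝ) ≤ (n:ℝ) := by exact_mod_cast hn
  have hnne : ((n:ℝ)) ≠ 0 := by linarith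
  refine ⟨4 * (n:ℝ)^2, by nlinarith, max 1 ((3*L*(n:ℝ)^3*C)^n),
    lt_of_lt_of_le one_pos (le_max_left _ _), ?_⟩
  intro t ht B hBcont hB Φ hΦ0 hΦ'
  have ht1 : (1:ℝ) ≤ t := le_trans (le_max_left _ _) ht
  have htpos : (0:ℝ) < t := by linarith
  set p : ℝ := t ^ ((1:ℝ)/n) with hp_def
  have hppos : 0 < p := Real.rpow_pos_of_pos htpos _
  set β : ℝ := C * t ^ (-(1/(n:ℝ))) with hβ_def
  have hqinv : t ^ (-(1/(n:ℝ))) = p⁻¹ := by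
    rw [hp_def, ← Real.rpow_neg htpos.le]
  have hβpos : 0 < β := mul_pos hC (by rw [hqinv]; positivity)
  set ε : ℝ := (n:ℝ)^3 * β with hε_def
  have hεpos : 0 < ε := by positivity
  have hap : 3*L*(n:ℝ)^3*C ≤ p := by
    have ha : (0:ℝ) < 3*L*(n:ℝ)^3*C := by positivity
    have h1 : ((3*L*(n:ℝ)^3*C)^n : ℝ) ≤ t := le_trans (le_max_right _ _) ht
    have h2 : ((3*L*(n:ℝ)^3*C)^n : ℝ) ^ ((1:ℝ)/n) ≤ t ^ ((1:ℝ)/n) :=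
      Real.rpow_le_rpow (by positivity) h1 (by positivity)
    have h3 : ((3*L*(n:ℝ)^3*C)^n : ℝ) ^ ((1:ℝ)/n) = 3*L*(n:ℝ)^3*C := by
      rw [← Real.rpow_natCast (3*L*(n:ℝ)^3*C) n, ← Real.rpow_mul ha.le,
        mul_one_div, div_self hnne, Real.rpow_one]
    rw [h3] at h2
    exact h2
  have hεL : ε * L ≤ 1/3 := by
    have hβ' : β ≤ C / (3*L*(n:ℝ)^3*C) := by
      rw [hβ_def, hqinv]
      have h1 : p⁻¹ ≤ (3*L*(n:ℝ)^3*C)⁻¹ := by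
        apply inv_anti₀ (by positivity) hap
      calc C * p⁻¹ ≤ C * (3*L*(n:ℝ)^3*C)⁻¹ := by
            exact mul_le_mul_of_nonneg_left h1 hC.le
        _ = C / (3*L*(n:ℝ)^3*C) := by ring
    have h2 : C / (3*L*(n:ℝ)^3*C) = 1/(3*L*(n:ℝ)^3) := by
      field_simp
    rw [h2] at hβ'
    have h3 : ε ≤ 1/(3*L) := by
      rw [hε_def]
      calc (n:ℝ)^3 * β ≤ (n:ℝ)^3 * (1/(3*L*(n:ℝ)^3)) :=
            mul_le_mul_of_nonneg_left hβ' (by positivity)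
        _ = 1/(3*L) := by field_simp
    calc ε * L ≤ (1/(3*L)) * L := mul_le_mul_of_nonneg_right h3 hL.le
      _ = 1/3 := by field_simp
  have hexpεL : Real.exp (ε*L) ≤ 3/2 := by
    have h1 : (1:ℝ) - ε*L ≤ Real.exp (-(ε*L)) := by
      have := Real.add_one_le_exp (-(ε*L)); linarith
    have h2 : (2:ℝ)/3 ≤ Real.exp (-(ε*L)) := by linarith
    have h3 : Real.exp (ε*L) = (Real.exp (-(ε*L)))⁻¹ := by
      rw [← Real.exp_neg, neg_neg]
    rw [h3]
    rw [inv_le_comm₀ (Real.exp_pos _) (by norm_num : (0:ℝ) < 3/2)]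
    linarith
  -- rescaled solution
  set d : Fin n → ℝ := fun i => p * (μ i - μ 0) with hd_def
  have hd_nonpos : ∀ i, d i ≤ 0 := fun i =>
    mul_nonpos_of_nonneg_of_nonpos hppos.le (by linarith [hμ i])
  have hd0 : d 0 = 0 := by simp [hd_def]
  set u : ℝ → Matrix (Fin n) (Fin n) ℝ := fun s => Real.exp (-(μ 0 * p * s)) • Φ s with hu_def
  have hu0 : u 0 = 1 := by simp [hu_def, hΦ0]
  have hΦcont : ContinuousOn Φ (Icc 0 L) := fun s hs => (hΦ' s hs).continuousWithinAt
  have hucont : ContinuousOn u (Icc 0 L) := by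
    refine ContinuousOn.smul (f := fun s => Real.exp (-(μ 0 * p * s))) ?_ hΦcont
    exact (Real.continuous_exp.comp (by continuity)).continuousOn
  have hBentry : ∀ (i k : Fin n), ContinuousOn (fun r => B r i k) (Icc 0 L) :=
    fun i k => (entryCLM n i k).continuous.comp_continuousOn hBcont
  have huentry : ∀ (i k : Fin n), ContinuousOn (fun r => u r i k) (Icc 0 L) :=
    fun i k => (entryCLM n i k).continuous.comp_continuousOn hucont
  have hgcont : ∀ (i j : Fin n), ContinuousOn (fun r => (B r * u r) i j) (Icc 0 L) := by
    intro i j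
    have heq : (fun r => (B r * u r) i j) = fun r => ∑ k, B r i k * u r k j := by
      funext r; rw [Matrix.mul_apply]
    rw [heq]
    exact continuousOn_finset_sum _ fun k _ => (hBentry i k).mul (huentry k j)
  have hw' : ∀ (i j : Fin n), ∀ s ∈ Icc (0:ℝ) L,
      HasDerivWithinAt (fun r => u r i j) (d i * u s i j + (B s * u s) i j) (Icc 0 L) s := by
    intro i j s hs
    have hΦe : HasDerivWithinAt (fun r => Φ r i j)
        (((p • Matrix.diagonal μ + B s) * Φ s) i j) (Icc 0 L) s :=
      (entryCLM n i j).hasFDerivAt.comp_hasDerivWithinAt s (hΦ' s hs)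
    have h1 : HasDerivAt (fun r : ℝ => -(μ 0 * p * r)) (-(μ 0 * p)) s := by
      have := (hasDerivAt_id s).const_mul (-(μ 0 * p))
      simpa [mul_assoc] using this
    have hc : HasDerivAt (fun r => Real.exp (-(μ 0 * p * r)))
        (Real.exp (-(μ 0 * p * s)) * -(μ 0 * p)) s := h1.exp
    have hmul := hc.hasDerivWithinAt.mul hΦe
    have hueq : (fun r => u r i j) = fun r => Real.exp (-(μ 0 * p * r)) * Φ r i j := by
      funext r; simp [hu_def, Matrix.smul_apply, smul_eq_mul]
    have hmul' : HasDerivWithinAt (fun r => u r i j)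
        (Real.exp (-(μ 0 * p * s)) * -(μ 0 * p) * Φ s i j
          + Real.exp (-(μ 0 * p * s)) * (((p • Matrix.diagonal μ + B s) * Φ s) i j))
        (Icc 0 L) s := by
      rw [hueq]; exact hmul
    convert hmul' using 1
    have hDentry : ((p • Matrix.diagonal μ + B s) * Φ s) i j
        = p * (μ i * Φ s i j) + (B s * Φ s) i j := by
      rw [Matrix.add_mul, Matrix.smul_mul, Matrix.add_apply, Matrix.smul_apply,
        Matrix.diagonal_mul, smul_eq_mul]
    have hBu : (B s * u s) i j = Real.exp (-(μ 0 * p * s)) * (B s * Φ s) i j := by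
      rw [hu_def]
      rw [Matrix.mul_smul, Matrix.smul_apply, smul_eq_mul]
    have hus : u s i j = Real.exp (-(μ 0 * p * s)) * Φ s i j := by
      simp [hu_def, Matrix.smul_apply, smul_eq_mul]
    rw [hDentry, hBu, hus, hd_def]
    ring
  have hentry : ∀ (i j : Fin n), ∀ x ∈ Icc (0:ℝ) L,
      |u x i j - Real.exp (d i * x) * ((1 : Matrix (Fin n) (Fin n) ℝ) i j)|
        ≤ ∫ r in (0:ℝ)..x, |(B r * u r) i j| := by
    intro i j x hx
    have h := ode_entry_bound (hd_nonpos i) (huentry i j) (hgcont i j) (hw' i j) hx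
    rwa [hu0] at h
  -- bound on the coupling terms
  have hgle : ∀ (i j : Fin n), ∀ r ∈ Icc (0:ℝ) L,
      |(B r * u r) i j| ≤ ((n:ℝ) * β) * ‖u r‖ := by
    intro i j r hr
    rw [Matrix.mul_apply]
    calc |∑ k, B r i k * u r k j| ≤ ∑ k, |B r i k * u r k j| :=
          Finset.abs_sum_le_sum_abs _ _
      _ ≤ ∑ _k : Fin n, β * ‖u r‖ := by
          apply Finset.sum_le_sum
          intro k _
          rw [abs_mul]
          have h1 : |B r i k| ≤ β := hB r hr i k
          have h2 : |u r k j| ≤ ‖u r‖ := abs_entry_le_norm _ _ _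
          exact mul_le_mul h1 h2 (abs_nonneg _) (le_trans (abs_nonneg _) h1)
      _ = (n:ℝ) * β * ‖u r‖ := by
          rw [Finset.sum_const, Finset.card_univ, Fintype.card_fin, nsmul_eq_mul]; ring
  set G : ℝ → ℝ := fun x => ∫ r in (0:ℝ)..x, ‖u r‖ with hG_def
  have hnorm_cont : ContinuousOn (fun r => ‖u r‖) (Icc 0 L) := hucont.norm
  have hnormint : ∀ x ∈ Icc (0:ℝ) L,
      IntervalIntegrable (fun r => ‖u r‖) MeasureTheory.volume 0 x := by
    intro x hx
    apply ContinuousOn.intervalIntegrable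
    rw [uIcc_of_le hx.1]
    exact hnorm_cont.mono (Icc_subset_Icc le_rfl hx.2)
  have hGnonneg : ∀ x ∈ Icc (0:ℝ) L, 0 ≤ G x := fun x hx =>
    intervalIntegral.integral_nonneg hx.1 (fun r _ => norm_nonneg _)
  have hintle : ∀ (i j : Fin n), ∀ x ∈ Icc (0:ℝ) L,
      (∫ r in (0:ℝ)..x, |(B r * u r) i j|) ≤ (n:ℝ) * β * G x := by
    intro i j x hx
    have hsub : Icc (0:ℝ) x ⊆ Icc 0 L := Icc_subset_Icc le_rfl hx.2
    have h1 : (∫ r in (0:ℝ)..x, |(B r * u r) i j|)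
        ≤ ∫ r in (0:ℝ)..x, ((n:ℝ)*β) * ‖u r‖ := by
      apply intervalIntegral.integral_mono_on hx.1
      · apply ContinuousOn.intervalIntegrable
        rw [uIcc_of_le hx.1]
        exact ((hgcont i j).mono hsub).abs
      · exact (hnormint x hx).const_mul _
      · intro r hr
        exact hgle i j r (hsub hr)
    rwa [intervalIntegral.integral_const_mul] at h1
  -- pointwise norm bound
  have hρ : ∀ x ∈ Icc (0:ℝ) L, ‖u x‖ ≤ (n:ℝ) + ε * G x := by
    intro x hx
    have h1 : ‖u x‖ ≤ ∑ i, ∑ j, |u x i j| := norm_le_sum_abs _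
    have h2 : ∀ (i j : Fin n),
        |u x i j| ≤ |(1 : Matrix (Fin n) (Fin n) ℝ) i j| + (n:ℝ)*β*G x := by
      intro i j
      have h3 := (hentry i j x hx).trans (hintle i j x hx)
      have h5 : |Real.exp (d i * x) * (1 : Matrix (Fin n) (Fin n) ℝ) i j|
          ≤ |(1 : Matrix (Fin n) (Fin n) ℝ) i j| := by
        rw [abs_mul, abs_of_pos (Real.exp_pos _)]
        have hle1 : Real.exp (d i * x) ≤ 1 :=
          Real.exp_le_one_iff.mpr (mul_nonpos_of_nonpos_of_nonneg (hd_nonpos i) hx.1)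
        nlinarith [abs_nonneg ((1 : Matrix (Fin n) (Fin n) ℝ) i j), Real.exp_pos (d i * x)]
      calc |u x i j| = |(u x i j - Real.exp (d i * x) * (1 : Matrix (Fin n) (Fin n) ℝ) i j)
              + Real.exp (d i * x) * (1 : Matrix (Fin n) (Fin n) ℝ) i j| := by ring_nf
        _ ≤ |u x i j - Real.exp (d i * x) * (1 : Matrix (Fin n) (Fin n) ℝ) i j|
              + |Real.exp (d i * x) * (1 : Matrix (Fin n) (Fin n) ℝ) i j| := abs_add_le _ _
        _ ≤ (n:ℝ)*β*G x + |(1 : Matrix (Fin n) (Fin n) ℝ) i j| := add_le_add h3 h5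
        _ = |(1 : Matrix (Fin n) (Fin n) ℝ) i j| + (n:ℝ)*β*G x := by ring
    have hone : ∀ i : Fin n, (∑ j, |(1 : Matrix (Fin n) (Fin n) ℝ) i j|) = 1 := by
      intro i
      simp [Matrix.one_apply, apply_ite abs]
    calc ‖u x‖ ≤ ∑ i, ∑ j, |u x i j| := h1
      _ ≤ ∑ i : Fin n, ∑ j : Fin n,
            (|(1 : Matrix (Fin n) (Fin n) ℝ) i j| + (n:ℝ)*β*G x) :=
          Finset.sum_le_sum fun i _ => Finset.sum_le_sum fun j _ => h2 i j
      _ = (n:ℝ) + ε * G x := by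
          simp only [Finset.sum_add_distrib, hone, Finset.sum_const, Finset.card_univ,
            Fintype.card_fin, nsmul_eq_mul, mul_one]
          rw [hε_def]
          push_cast
          ring
  -- Gronwall
  have hG' : ∀ x ∈ Ico (0:ℝ) L, HasDerivWithinAt G (‖u x‖) (Ici x) x := by
    intro x hx
    have hxIcc : x ∈ Icc (0:ℝ) L := ⟨hx.1, hx.2.le⟩
    have hmem : Icc (0:ℝ) L ∈ nhdsWithin x (Ioi x) := by
      apply mem_nhdsWithin.mpr
      exact ⟨Iio L, isOpen_Iio, hx.2, fun y hy => ⟨le_trans hx.1 hy.2.le, hy.1.le⟩⟩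
    apply intervalIntegral.integral_hasDerivWithinAt_right (hnormint x hxIcc)
      ⟨Icc 0 L, hmem, hnorm_cont.aestronglyMeasurable measurableSet_Icc⟩
    exact (hnorm_cont.continuousWithinAt hxIcc).mono_of_mem_nhdsWithin hmem
  have hGcont : ContinuousOn G (Icc 0 L) := by
    have hInt : MeasureTheory.IntegrableOn (fun r => ‖u r‖) (uIcc 0 L)
        MeasureTheory.volume := by
      rw [uIcc_of_le hL.le]
      exact hnorm_cont.integrableOn_Icc
    have := intervalIntegral.continuousOn_primitive_interval (a := 0) (b := L) hInt
    rwa [uIcc_of_le hL.le] at this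
  have hGron : ∀ x ∈ Icc (0:ℝ) L, ‖G x‖ ≤ gronwallBound 0 ε (n:ℝ) (x - 0) := by
    apply norm_le_gronwallBound_of_norm_deriv_right_le hGcont hG'
    · simp [hG_def]
    · intro x hx
      have hxIcc : x ∈ Icc (0:ℝ) L := ⟨hx.1, hx.2.le⟩
      rw [Real.norm_eq_abs, Real.norm_eq_abs, abs_of_nonneg (norm_nonneg (u x)),
        abs_of_nonneg (hGnonneg x hxIcc)]
      linarith [hρ x hxIcc]
  have hGL : G L ≤ (n:ℝ)/(2*ε) := by
    have h1 := hGron L (right_mem_Icc.mpr hL.le)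
    rw [gronwallBound_of_K_ne_0 hεpos.ne'] at h1
    rw [Real.norm_eq_abs, abs_of_nonneg (hGnonneg L (right_mem_Icc.mpr hL.le))] at h1
    have h2 : Real.exp (ε*(L-0)) - 1 ≤ 1/2 := by
      rw [sub_zero]; linarith
    have h3 : (n:ℝ)/ε * (Real.exp (ε*(L-0)) - 1) ≤ (n:ℝ)/ε * (1/2) :=
      mul_le_mul_of_nonneg_left h2 (by positivity)
    have h4 : (n:ℝ)/ε * (1/2) = (n:ℝ)/(2*ε) := by ring
    calc G L ≤ 0 * Real.exp (ε * (L-0)) + (n:ℝ)/ε * (Real.exp (ε*(L-0)) - 1) := h1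
      _ ≤ (n:ℝ)/(2*ε) := by rw [zero_mul, zero_add, ← h4]; exact h3
  have hLIcc : L ∈ Icc (0:ℝ) L := right_mem_Icc.mpr hL.le
  have hfinal_int : ∀ (i j : Fin n),
      (∫ r in (0:ℝ)..L, |(B r * u r) i j|) ≤ 1/(2*(n:ℝ)) := by
    intro i j
    have h1 := hintle i j L hLIcc
    have h2 : (n:ℝ)*β*G L ≤ (n:ℝ)*β*((n:ℝ)/(2*ε)) :=
      mul_le_mul_of_nonneg_left hGL (by positivity)
    have h3 : (n:ℝ)*β*((n:ℝ)/(2*ε)) = 1/(2*(n:ℝ)) := by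
      rw [hε_def]
      field_simp
    linarith
  -- entry bounds at L
  have hentryL : ∀ (i j : Fin n), |u L i j| ≤ 2 := by
    intro i j
    have h3 := (hentry i j L hLIcc).trans (hfinal_int i j)
    have h5 : |Real.exp (d i * L) * (1 : Matrix (Fin n) (Fin n) ℝ) i j|
        ≤ |(1 : Matrix (Fin n) (Fin n) ℝ) i j| := by
      rw [abs_mul, abs_of_pos (Real.exp_pos _)]
      have hle1 : Real.exp (d i * L) ≤ 1 :=
        Real.exp_le_one_iff.mpr (mul_nonpos_of_nonpos_of_nonneg (hd_nonpos i) hL.le)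
      nlinarith [abs_nonneg ((1 : Matrix (Fin n) (Fin n) ℝ) i j), Real.exp_pos (d i * L)]
    have h6 : |(1 : Matrix (Fin n) (Fin n) ℝ) i j| ≤ 1 := by
      by_cases h : i = j <;> simp [Matrix.one_apply, h]
    have h7 : (1:ℝ)/(2*(n:ℝ)) ≤ 1/2 := by
      rw [div_le_div_iff₀ (by positivity) (by norm_num)]
      linarith
    have h8 : |u L i j| ≤ |u L i j - Real.exp (d i * L) * (1 : Matrix (Fin n) (Fin n) ℝ) i j|
        + |Real.exp (d i * L) * (1 : Matrix (Fin n) (Fin n) ℝ) i j| := by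
      have := abs_add_le (u L i j - Real.exp (d i * L) * (1 : Matrix (Fin n) (Fin n) ℝ) i j)
        (Real.exp (d i * L) * (1 : Matrix (Fin n) (Fin n) ℝ) i j)
      simpa using this
    linarith
  have hdiagL : ∀ i : Fin n, Real.exp (d i * L) - 1/(2*(n:ℝ)) ≤ u L i i := by
    intro i
    have h3 := (hentry i i L hLIcc).trans (hfinal_int i i)
    rw [Matrix.one_apply_eq, mul_one] at h3
    have := abs_le.mp h3
    linarith [this.1]
  have htr : (1:ℝ)/2 ≤ Matrix.trace (u L) := by
    have h00 : 1 - 1/(2*(n:ℝ)) ≤ u L 0 0 := by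
      have := hdiagL 0
      rw [hd0, zero_mul, Real.exp_zero] at this
      exact this
    have hii : ∀ i : Fin n, -(1/(2*(n:ℝ))) ≤ u L i i := by
      intro i
      have h1 := hdiagL i
      have h2 : (0:ℝ) < Real.exp (d i * L) := Real.exp_pos _
      linarith
    have hsplit : Matrix.trace (u L)
        = u L 0 0 + ∑ i ∈ Finset.univ.erase 0, u L i i := by
      rw [Matrix.trace]
      exact (Finset.add_sum_erase _ _ (Finset.mem_univ 0)).symm
    have hcard : (Finset.univ.erase (0 : Fin n)).card = n - 1 := by
      rw [Finset.card_erase_of_mem (Finset.mem_univ _), Finset.card_univ, Fintype.card_fin]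
    have hlow : ((n:ℝ) - 1) * (-(1/(2*(n:ℝ)))) ≤ ∑ i ∈ Finset.univ.erase 0, u L i i := by
      have h1 := Finset.card_nsmul_le_sum (Finset.univ.erase (0:Fin n)) _ _
        (fun i _ => hii i)
      rw [hcard, nsmul_eq_mul] at h1
      have h2 : ((n - 1 : ℕ) : ℝ) = (n:ℝ) - 1 := by
        push_cast [hn]
        ring
      rwa [h2] at h1
    have hcalc : (1 - 1/(2*(n:ℝ))) + ((n:ℝ)-1)*(-(1/(2*(n:ℝ)))) = 1/2 := by
      field_simp
      ring
    rw [hsplit]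
    linarith
  -- relation between Φ L and u L
  have hXdef : Real.exp (L * p * μ 0) * Real.exp (-(μ 0 * p * L)) = 1 := by
    rw [← Real.exp_add]
    ring_nf
    exact Real.exp_zero
  have hΦL : ∀ i j : Fin n, Φ L i j = Real.exp (L * p * μ 0) * u L i j := by
    intro i j
    have h1 : u L i j = Real.exp (-(μ 0 * p * L)) * Φ L i j := by
      simp [hu_def, Matrix.smul_apply, smul_eq_mul]
    rw [h1, ← mul_assoc, hXdef, one_mul]
  set E : ℝ := Real.exp (L * p * μ 0) with hE_def
  have hEpos : 0 < E := Real.exp_pos _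
  set M : Matrix (Fin n) (Fin n) ℂ := (Φ L).map (Complex.ofReal) with hM_def
  constructor
  · -- lower bound on spectral radius via the trace
    by_contra hcon
    push_neg at hcon
    set S := M.charpoly.roots with hS_def
    have hcardS : Multiset.card S = n := by
      have h1 : Multiset.card S = M.charpoly.natDegree :=
        Polynomial.splits_iff_card_roots.mp (IsAlgClosed.splits _)
      rw [h1, Matrix.charpoly_natDegree_eq_dim, Fintype.card_fin]
    have htrace : M.trace = S.sum := Matrix.trace_eq_sum_roots_charpoly M
    have hmemS : ∀ z ∈ S, z ∈ spectrum ℂ M := fun z hz =>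
      (mem_spectrum_iff_root n M z).mpr (Polynomial.isRoot_of_mem_roots hz)
    have hb : ∀ y ∈ S.map (fun z : ℂ => ‖z‖), y ≤ 1/(4*(n:ℝ)^2) * E := by
      intro y hy
      obtain ⟨z, hz, rfl⟩ := Multiset.mem_map.mp hy
      exact (hcon z (hmemS z hz)).le
    have hsum := Multiset.sum_le_card_nsmul (S.map (fun z : ℂ => ‖z‖)) _ hb
    rw [Multiset.card_map, hcardS, nsmul_eq_mul] at hsum
    have htr_abs : ‖M.trace‖ ≤ (S.map (fun z : ℂ => ‖z‖)).sum := by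
      rw [htrace]
      exact norm_multiset_sum_le S
    have htrM : M.trace = Complex.ofReal ((Φ L).trace) := by
      rw [hM_def]
      simp [Matrix.trace, Matrix.diag, Matrix.map_apply]
    have htrΦ : (Φ L).trace = E * (u L).trace := by
      rw [Matrix.trace, Matrix.trace, Finset.mul_sum]
      exact Finset.sum_congr rfl fun i _ => hΦL i i
    have habs : ‖M.trace‖ = |E * (u L).trace| := by
      rw [htrM, htrΦ, Complex.norm_real, Real.norm_eq_abs]
    have h5 : E/2 ≤ E * (u L).trace := by nlinarith
    have h6 : |E * (u L).trace| = E * (u L).trace := abs_of_pos (by nlinarith)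
    rw [habs, h6] at htr_abs
    have h7 : E * (u L).trace ≤ (n:ℝ) * (1/(4*(n:ℝ)^2) * E) := le_trans htr_abs hsum
    have h8 : (n:ℝ) * (1/(4*(n:ℝ)^2) * E) = E/(4*(n:ℝ)) := by
      field_simp
    rw [h8] at h7
    have h9 : E/(4*(n:ℝ)) ≤ E/4 := by
      apply div_le_div_of_nonneg_left hEpos.le (by norm_num)
      linarith
    linarith
  · -- upper bound via Gershgorin
    intro lam hlam
    obtain ⟨k, hk⟩ := eigenvalue_mem_ball (hasEigenvalue_of_mem_spectrum n M lam hlam)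
    have hdist : ‖lam - M k k‖ ≤ ∑ j ∈ Finset.univ.erase k, ‖M k j‖ := by
      have := Metric.mem_closedBall.mp hk
      rwa [dist_eq_norm] at this
    have hMentry : ∀ j : Fin n, ‖M k j‖ ≤ 2 * E := by
      intro j
      have h1 : M k j = Complex.ofReal (Φ L k j) := by rw [hM_def, Matrix.map_apply]
      rw [h1, Complex.norm_real, Real.norm_eq_abs, hΦL, abs_mul, abs_of_pos hEpos]
      have := hentryL k j
      nlinarith
    have h1 : ‖lam‖ ≤ ‖M k k‖ + ‖lam - M k k‖ := by
      calc ‖lam‖ = ‖M k k + (lam - M k k)‖ := by ring_nf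
        _ ≤ ‖M k k‖ + ‖lam - M k k‖ := norm_add_le _ _
    have h2 : ‖M k k‖ + ∑ j ∈ Finset.univ.erase k, ‖M k j‖ = ∑ j, ‖M k j‖ :=
      Finset.add_sum_erase _ (fun j => ‖M k j‖) (Finset.mem_univ k)
    have h3 : (∑ j : Fin n, ‖M k j‖) ≤ ∑ _j : Fin n, 2*E :=
      Finset.sum_le_sum fun j _ => hMentry j
    have h4 : (∑ _j : Fin n, 2*E) = (n:ℝ) * (2*E) := by
      rw [Finset.sum_const, Finset.card_univ, Fintype.card_fin, nsmul_eq_mul]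
    calc ‖lam‖ ≤ ‖M k k‖ + ‖lam - M k k‖ := h1
      _ ≤ ‖M k k‖ + ∑ j ∈ Finset.univ.erase k, ‖M k j‖ := by linarith
      _ = ∑ j, ‖M k j‖ := h2
      _ ≤ (n:ℝ) * (2*E) := by rw [← h4]; exact h3
      _ ≤ 4*(n:ℝ)^2 * E := by
          nlinarith [mul_pos hEpos (mul_pos (by linarith : (0:ℝ) < (n:ℝ))
            (by linarith : (0:ℝ) < 2*(n:ℝ)-1))]
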